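/- Fix an integer N ≥ 3 and h ∈ {2,…,N−1}. Let L_h and L_{h−1} be the lists enumerating Σ₊ in strictly decreasing order with respect to ≻_h and ≻_{h−1} respectively. Then there exists a finite sequence of moves of the following two kinds transforming L_h into L_{h−1}: (swap move) interchange two adjacent entries (k,l) and (k′,l′) with {k,l} ∩ {k′,l′} = ∅; (A₂ move) replace three consecutive entries (h,l), (k,l), (k,h), where 1 ≤ k < h < l ≤ N, by (k,h), (k,l), (h,l). Moreover the sequence can be chosen so that for every pair (k,l) with 1 ≤ k < h < l ≤ N the A₂ move with those parameters is used exactly once, and all remaining moves are swap moves. -/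

import Mathlib

/-- `regionIdx h p` is `0`, `1`, `2` according to whether `p` lies in
`A_h = {(k,l) : k ≤ h < l}`, `B_h = {(k,l) : l ≤ h}`, or `C_h = {(k,l) : h < k}`. -/
def regionIdx (h : ℕ) (p : ℕ × ℕ) : ℕ :=
  if p.1 ≤ h ∧ h < p.2 then 0 else if p.2 ≤ h then 1 else 2

/-- The comparison within a region. -/
def innerGt (h : ℕ) (p q : ℕ × ℕ) : Prop :=
  if p.1 ≤ h ∧ h < p.2 then p.2 < q.2 ∨ (p.2 = q.2 ∧ q.1 < p.1)
  else if p.2 ≤ h then q.2 < p.2 ∨ (p.2 = q.2 ∧ q.1 < p.1)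
  else p.1 < q.1 ∨ (p.1 = q.1 ∧ p.2 < q.2)

/-- The special order `≻_h` on positive roots of `sl_N`, identified with pairs
`(k,l)`, `1 ≤ k < l ≤ N`. -/
def succOrd (h : ℕ) (p q : ℕ × ℕ) : Prop :=
  regionIdx h p < regionIdx h q ∨ (regionIdx h p = regionIdx h q ∧ innerGt h p q)

/-- A move in a sequence of elementary transformations: either a swap of two adjacent
roots spanning an `A₁⊕A₁` subsystem, or the `A₂` reversal labeled by a pair `(k,l)`
with `1 ≤ k < h < l ≤ N`. -/
inductive KZMove where
  | swap : KZMove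
  | a2 : ℕ → ℕ → KZMove
  deriving DecidableEq

/-- Two roots `(k,l)`, `(k′,l′)` span an `A₁⊕A₁` subsystem iff `{k,l} ∩ {k′,l′} = ∅`. -/
def indexDisjoint (p q : ℕ × ℕ) : Prop :=
  p.1 ≠ q.1 ∧ p.1 ≠ q.2 ∧ p.2 ≠ q.1 ∧ p.2 ≠ q.2

/-- `applyMove N h m L L'` : the move `m` transforms the list `L` into `L'`.
A swap move interchanges two adjacent entries with disjoint index sets; the `A₂` move
labeled `(k,l)` (with `1 ≤ k < h < l ≤ N`) replaces three consecutive entries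
`(h,l), (k,l), (k,h)` by `(k,h), (k,l), (h,l)`. -/
def applyMove (N h : ℕ) : KZMove → List (ℕ × ℕ) → List (ℕ × ℕ) → Prop
  | .swap, L, L' => ∃ (l1 l2 : List (ℕ × ℕ)) (p q : ℕ × ℕ),
      indexDisjoint p q ∧ L = l1 ++ p :: q :: l2 ∧ L' = l1 ++ q :: p :: l2
  | .a2 k l, L, L' => 1 ≤ k ∧ k < h ∧ h < l ∧ l ≤ N ∧
      ∃ (l1 l2 : List (ℕ × ℕ)),
        L = l1 ++ (h, l) :: (k, l) :: (k, h) :: l2 ∧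
        L' = l1 ++ (k, h) :: (k, l) :: (h, l) :: l2

/-- `movesChain N h ms L L'` : the sequence of moves `ms`, applied one after another,
transforms `L` into `L'`. -/
def movesChain (N h : ℕ) : List KZMove → List (ℕ × ℕ) → List (ℕ × ℕ) → Prop
  | [], L, L' => L = L'
  | m :: ms, L, L' => ∃ Lmid, applyMove N h m L Lmid ∧ movesChain N h ms Lmid L'

open List

/-- `seg l b n = [(b+n, l), (b+n-1, l), ..., (b+1, l)]`. -/
def seg (l b n : ℕ) : List (ℕ × ℕ) :=
  match n with
  | 0 => []
  | n+1 => (b+n+1, l) :: seg l b n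

lemma mem_seg {p : ℕ × ℕ} {l b n : ℕ} :
    p ∈ seg l b n ↔ p.2 = l ∧ b + 1 ≤ p.1 ∧ p.1 ≤ b + n := by
  induction n with
  | zero => simp [seg]
  | succ n ih =>
    simp [seg, ih, Prod.ext_iff]
    constructor
    · rintro (⟨h1, h2⟩ | ⟨h1, h2, h3⟩) <;> omega
    · rintro ⟨h1, h2, h3⟩
      rcases Nat.lt_or_ge p.1 (b+n+1) with hc | hc
      · right; omega
      · left; omega

lemma seg_snoc (l b n : ℕ) : seg l b (n+1) = seg l (b+1) n ++ [(b+1, l)] := by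
  induction n with
  | zero => simp [seg]
  | succ n ih =>
    have : seg l b (n+2) = (b+n+2, l) :: seg l b (n+1) := rfl
    rw [this, ih]
    show _ = (b+1+n+1, l) :: (seg l (b+1) n ++ [(b+1,l)])
    congr 2 <;> omega

lemma pairwise_seg (l b n : ℕ) :
    List.Pairwise (fun p q => q.1 < p.1) (seg l b n) := by
  induction n with
  | zero => simp [seg]
  | succ n ih =>
    refine List.pairwise_cons.2 ⟨fun q hq => ?_, ih⟩
    rw [mem_seg] at hq
    simp; omega

def Apart (N h : ℕ) : List (ℕ × ℕ) :=
  (List.range' (h+1) (N-h)).flatMap (fun l => seg l 0 h)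

def Bp : ℕ → List (ℕ × ℕ)
  | 0 => []
  | 1 => []
  | (m+2) => seg (m+2) 0 (m+1) ++ Bp (m+1)

def asc (k n : ℕ) : List (ℕ × ℕ) := (List.range' (k+1) n).map (fun l => (k, l))

def Cpart (N h : ℕ) : List (ℕ × ℕ) :=
  (List.range' (h+1) (N-1-h)).flatMap (fun k => asc k (N-k))

def CL (N h : ℕ) : List (ℕ × ℕ) := Apart N h ++ Bp h ++ Cpart N h

lemma mem_Apart {p : ℕ × ℕ} {N h : ℕ} (hh : 1 ≤ h) (hhN : h ≤ N) :
    p ∈ Apart N h ↔ 1 ≤ p.1 ∧ p.1 ≤ h ∧ h < p.2 ∧ p.2 ≤ N := by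
  simp only [Apart, List.mem_flatMap, List.mem_range'_1, mem_seg]
  constructor
  · rintro ⟨l, ⟨h1, h2⟩, h3, h4, h5⟩; omega
  · rintro ⟨h1, h2, h3, h4⟩; exact ⟨p.2, by omega, by omega⟩

lemma mem_Bp {p : ℕ × ℕ} {m : ℕ} :
    p ∈ Bp m ↔ 1 ≤ p.1 ∧ p.1 < p.2 ∧ p.2 ≤ m := by
  induction m with
  | zero => simp [Bp]; omega
  | succ n ih =>
    match n, ih with
    | 0, _ => simp [Bp]; omega
    | (n'+1), ih =>
      simp only [Bp, List.mem_append, mem_seg, ih]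
      constructor
      · rintro (⟨h1, h2, h3⟩ | ⟨h1, h2, h3⟩) <;> omega
      · rintro ⟨h1, h2, h3⟩
        rcases Nat.lt_or_ge p.2 (n'+2) with hc | hc
        · right; omega
        · left; omega

lemma mem_asc {p : ℕ × ℕ} {k n : ℕ} :
    p ∈ asc k n ↔ p.1 = k ∧ k + 1 ≤ p.2 ∧ p.2 ≤ k + n := by
  simp only [asc, List.mem_map, List.mem_range'_1, Prod.ext_iff]
  constructor
  · rintro ⟨l, ⟨h1, h2⟩, h3, h4⟩; omega
  · rintro ⟨h1, h2, h3⟩; exact ⟨p.2, by omega, by simp [h1]⟩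

lemma mem_Cpart {p : ℕ × ℕ} {N h : ℕ} :
    p ∈ Cpart N h ↔ h + 1 ≤ p.1 ∧ p.1 < p.2 ∧ p.2 ≤ N := by
  simp only [Cpart, List.mem_flatMap, List.mem_range'_1, mem_asc]
  constructor
  · rintro ⟨k, ⟨h1, h2⟩, h3, h4, h5⟩; omega
  · rintro ⟨h1, h2, h3⟩; exact ⟨p.1, by omega, by omega⟩

lemma mem_CL {p : ℕ × ℕ} {N h : ℕ} (hh : 1 ≤ h) (hhN : h ≤ N) :
    p ∈ CL N h ↔ 1 ≤ p.1 ∧ p.1 < p.2 ∧ p.2 ≤ N := by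
  simp only [CL, List.mem_append, mem_Apart hh hhN, mem_Bp, mem_Cpart]
  constructor
  · rintro ((h' | h') | h') <;> omega
  · rintro ⟨h1, h2, h3⟩
    rcases Nat.lt_or_ge h p.2 with hc | hc
    · rcases Nat.lt_or_ge h p.1 with hc' | hc'
      · exact Or.inr ⟨by omega, h2, h3⟩
      · exact Or.inl (Or.inl ⟨h1, by omega, hc, h3⟩)
    · exact Or.inl (Or.inr ⟨h1, h2, hc⟩)

section OrderLemmas

lemma succOrd_antisymm_aux {h : ℕ} {p q : ℕ × ℕ} (h1 : succOrd h p q) (h2 : succOrd h q p) :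
    False := by
  simp only [succOrd, regionIdx, innerGt] at h1 h2
  split_ifs at h1 h2 <;> omega

lemma succOrd_irrefl {h : ℕ} {p : ℕ × ℕ} : ¬ succOrd h p p := fun hp =>
  succOrd_antisymm_aux hp hp

lemma pairwise_range'_of {R : ℕ → ℕ → Prop} (s n : ℕ)
    (H : ∀ a b, s ≤ a → a < b → b < s + n → R a b) :
    List.Pairwise R (List.range' s n) := by
  refine (List.pairwise_lt_range' (s := s) (n := n)).imp_of_mem ?_
  intro a b ha hb hab
  rw [List.mem_range'_1] at ha hb
  exact H a b ha.1 hab hb.2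

lemma pairwise_asc (k n : ℕ) :
    List.Pairwise (fun p q => p.1 = k ∧ q.1 = k ∧ p.2 < q.2) (asc k n) := by
  unfold asc
  rw [List.pairwise_map]
  refine (List.pairwise_lt_range' (n := n)).imp_of_mem ?_
  intro a b _ _ hab
  exact ⟨rfl, rfl, hab⟩

lemma sorted_CL (N h : ℕ) (hh : 1 ≤ h) (hhN : h + 1 ≤ N) :
    List.Pairwise (succOrd h) (CL N h) := by
  have hA : List.Pairwise (succOrd h) (Apart N h) := by
    unfold Apart
    rw [List.pairwise_flatMap]
    constructor
    · intro l hl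
      rw [List.mem_range'_1] at hl
      refine (pairwise_seg l 0 h).imp_of_mem ?_
      intro p q hp hq hlt
      rw [mem_seg] at hp hq
      simp only [succOrd, regionIdx, innerGt]
      split_ifs <;> omega
    · refine pairwise_range'_of _ _ ?_
      intro a b ha hab hb p hp q hq
      rw [mem_seg] at hp hq
      simp only [succOrd, regionIdx, innerGt]
      split_ifs <;> omega
  have hB : ∀ m : ℕ, m ≤ h → List.Pairwise (succOrd h) (Bp m) := by
    intro m
    induction m with
    | zero => intro _; simp [Bp]
    | succ n ih =>
      intro hm
      match n, ih, hm with
      | 0, _, _ => simp [Bp]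
      | (n'+1), ih, hm =>
        show List.Pairwise (succOrd h) (seg (n'+2) 0 (n'+1) ++ Bp (n'+1))
        rw [List.pairwise_append]
        refine ⟨?_, ih (by omega), ?_⟩
        · refine (pairwise_seg _ 0 _).imp_of_mem ?_
          intro p q hp hq hlt
          rw [mem_seg] at hp hq
          simp only [succOrd, regionIdx, innerGt]
          split_ifs <;> omega
        · intro p hp q hq
          rw [mem_seg] at hp
          rw [mem_Bp] at hq
          simp only [succOrd, regionIdx, innerGt]
          split_ifs <;> omega
  have hC : List.Pairwise (succOrd h) (Cpart N h) := by
    unfold Cpart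
    rw [List.pairwise_flatMap]
    constructor
    · intro k hk
      rw [List.mem_range'_1] at hk
      refine (pairwise_asc k (N-k)).imp_of_mem ?_
      intro p q hp hq hlt
      rw [mem_asc] at hp hq
      simp only [succOrd, regionIdx, innerGt]
      split_ifs <;> omega
    · refine pairwise_range'_of _ _ ?_
      intro a b ha hab hb p hp q hq
      rw [mem_asc] at hp hq
      simp only [succOrd, regionIdx, innerGt]
      split_ifs <;> omega
  unfold CL
  rw [List.pairwise_append, List.pairwise_append]
  refine ⟨⟨hA, hB h le_rfl, ?_⟩, hC, ?_⟩
  · intro p hp q hq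
    rw [mem_Apart hh (by omega)] at hp
    rw [mem_Bp] at hq
    simp only [succOrd, regionIdx, innerGt]
    split_ifs <;> omega
  · intro p hp q hq
    rw [List.mem_append] at hp
    rw [mem_Cpart] at hq
    rcases hp with hp | hp
    · rw [mem_Apart hh (by omega)] at hp
      simp only [succOrd, regionIdx, innerGt]
      split_ifs <;> omega
    · rw [mem_Bp] at hp
      simp only [succOrd, regionIdx, innerGt]
      split_ifs <;> omega

lemma nodup_CL (N h : ℕ) (hh : 1 ≤ h) (hhN : h + 1 ≤ N) : (CL N h).Nodup := by
  refine (sorted_CL N h hh hhN).imp ?_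
  intro p q hpq heq
  exact succOrd_irrefl (heq ▸ hpq)

end OrderLemmas

section Moves

/-- Boolean test for not being a swap. -/
def nsw : KZMove → Bool
  | .swap => false
  | .a2 _ _ => true

lemma nsw_eq_true {m : KZMove} (hm : m ≠ KZMove.swap) : nsw m = true := by
  cases m with
  | swap => exact absurd rfl hm
  | a2 k l => rfl

lemma filter_nsw_eq_nil {ms : List KZMove} (h : ∀ m ∈ ms, m = KZMove.swap) :
    ms.filter nsw = [] := by
  rw [List.filter_eq_nil_iff]
  intro m hm
  rw [h m hm]
  simp [nsw]

lemma movesChain_nil {N h : ℕ} {L L' : List (ℕ × ℕ)} (e : L = L') :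
    movesChain N h [] L L' := e

lemma movesChain_congr {N h : ℕ} {ms : List KZMove} {L L' M M' : List (ℕ × ℕ)}
    (hc : movesChain N h ms L L') (e1 : L = M) (e2 : L' = M') :
    movesChain N h ms M M' := e1 ▸ e2 ▸ hc

lemma movesChain_append {N h : ℕ} {ms1 ms2 : List KZMove} {L L' L'' : List (ℕ × ℕ)}
    (h1 : movesChain N h ms1 L L') (h2 : movesChain N h ms2 L' L'') :
    movesChain N h (ms1 ++ ms2) L L'' := by
  induction ms1 generalizing L with
  | nil =>
    have e : L = L' := h1
    rw [List.nil_append, e]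
    exact h2
  | cons m ms ih =>
    obtain ⟨Lm, ha, hc⟩ := h1
    exact ⟨Lm, ha, ih hc⟩

lemma passLeft (N h : ℕ) (p : ℕ × ℕ) :
    ∀ (s l1 l2 : List (ℕ × ℕ)), (∀ q ∈ s, indexDisjoint q p) →
    ∃ ms, movesChain N h ms (l1 ++ s ++ p :: l2) (l1 ++ p :: (s ++ l2)) ∧
      ∀ m ∈ ms, m = KZMove.swap := by
  intro s
  induction s with
  | nil => intro l1 l2 _; exact ⟨[], movesChain_nil (by simp), by simp⟩
  | cons q s ih =>
    intro l1 l2 hd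
    obtain ⟨ms, hc, hsw⟩ := ih (l1 ++ [q]) l2 (fun x hx => hd x (List.mem_cons_of_mem _ hx))
    refine ⟨ms ++ [KZMove.swap], ?_, ?_⟩
    · refine movesChain_append (L' := l1 ++ q :: p :: (s ++ l2))
        (movesChain_congr hc (by simp) (by simp)) ?_
      exact ⟨l1 ++ p :: q :: (s ++ l2),
        ⟨l1, s ++ l2, q, p, hd q List.mem_cons_self, rfl, rfl⟩,
        movesChain_nil rfl⟩
    · intro m hm
      rcases List.mem_append.1 hm with h' | h'
      · exact hsw m h'
      · simpa using h'

lemma passRight (N h : ℕ) (p : ℕ × ℕ) :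
    ∀ (s l1 l2 : List (ℕ × ℕ)), (∀ q ∈ s, indexDisjoint p q) →
    ∃ ms, movesChain N h ms (l1 ++ p :: (s ++ l2)) (l1 ++ s ++ p :: l2) ∧
      ∀ m ∈ ms, m = KZMove.swap := by
  intro s
  induction s with
  | nil => intro l1 l2 _; exact ⟨[], movesChain_nil (by simp), by simp⟩
  | cons q s ih =>
    intro l1 l2 hd
    obtain ⟨ms, hc, hsw⟩ := ih (l1 ++ [q]) l2 (fun x hx => hd x (List.mem_cons_of_mem _ hx))
    refine ⟨KZMove.swap :: ms, ?_, ?_⟩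
    · refine ⟨l1 ++ q :: p :: (s ++ l2),
        ⟨l1, s ++ l2, p, q, hd q List.mem_cons_self, rfl, rfl⟩, ?_⟩
      exact movesChain_congr hc (by simp) (by simp)
    · intro m hm
      rcases List.mem_cons.1 hm with h' | h'
      · exact h'
      · exact hsw m h'

/-- The block for `l` at stage `k` : `(h-1,l) ... (k+1,l), (h,l), (k,l), ..., (1,l)`. -/
def blk (hh l k : ℕ) : List (ℕ × ℕ) := seg l k (hh - 1 - k) ++ (hh, l) :: seg l 0 k

lemma blockStep (N h k l : ℕ) (hk1 : 1 ≤ k) (hkh : k < h) (hhl : h < l) (hlN : l ≤ N)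
    (l1 l2 : List (ℕ × ℕ)) :
    ∃ ms, movesChain N h ms (l1 ++ blk h l k ++ (k, h) :: l2)
        (l1 ++ (k, h) :: (blk h l (k - 1) ++ l2)) ∧
      ms.filter nsw = [KZMove.a2 k l] := by
  obtain ⟨k', rfl⟩ : ∃ k', k = k' + 1 := ⟨k - 1, by omega⟩
  have hsegk : seg l 0 (k' + 1) = (k' + 1, l) :: seg l 0 k' := by
    show (0 + k' + 1, l) :: _ = _
    rw [Nat.zero_add]
  have hblk : blk h l (k' + 1) =
      seg l (k' + 1) (h - 1 - (k' + 1)) ++ (h, l) :: (k' + 1, l) :: seg l 0 k' := by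
    rw [blk, hsegk]
  have hblk' : blk h l (k' + 1 - 1) =
      (seg l (k' + 1) (h - 1 - (k' + 1)) ++ [(k' + 1, l)]) ++ (h, l) :: seg l 0 k' := by
    have : seg l k' (h - 1 - k') = seg l (k' + 1) (h - 1 - (k' + 1)) ++ [(k' + 1, l)] := by
      rw [show h - 1 - k' = (h - 1 - (k' + 1)) + 1 by omega]
      exact seg_snoc l k' _
    simp only [blk, Nat.add_sub_cancel, this]
  have hd1 : ∀ q ∈ seg l 0 k', indexDisjoint q (k' + 1, h) := by
    intro q hq
    rw [mem_seg] at hq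
    exact ⟨by omega, by omega, by omega, by omega⟩
  have hd3 : ∀ q ∈ seg l (k' + 1) (h - 1 - (k' + 1)), indexDisjoint q (k' + 1, h) := by
    intro q hq
    rw [mem_seg] at hq
    exact ⟨by omega, by omega, by omega, by omega⟩
  -- step a : pass (k,h) left over seg l 0 k'
  obtain ⟨ms1, hc1, hsw1⟩ := passLeft N h (k' + 1, h) (seg l 0 k')
    (l1 ++ seg l (k' + 1) (h - 1 - (k' + 1)) ++ [(h, l), (k' + 1, l)]) l2 hd1
  · -- step b : the A₂ move
    have hc2 : movesChain N h [KZMove.a2 (k' + 1) l]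
        ((l1 ++ seg l (k' + 1) (h - 1 - (k' + 1))) ++
          (h, l) :: (k' + 1, l) :: (k' + 1, h) :: (seg l 0 k' ++ l2))
        ((l1 ++ seg l (k' + 1) (h - 1 - (k' + 1))) ++
          (k' + 1, h) :: (k' + 1, l) :: (h, l) :: (seg l 0 k' ++ l2)) := by
      refine ⟨_, ⟨by omega, by omega, hhl, hlN, l1 ++ seg l (k' + 1) (h - 1 - (k' + 1)),
        seg l 0 k' ++ l2, rfl, rfl⟩, movesChain_nil rfl⟩
    -- step c : pass (k,h) left over seg l (k'+1) (h-1-(k'+1))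
    obtain ⟨ms3, hc3, hsw3⟩ := passLeft N h (k' + 1, h) (seg l (k' + 1) (h - 1 - (k' + 1)))
      l1 ((k' + 1, l) :: (h, l) :: (seg l 0 k' ++ l2)) hd3
    · have H1 : movesChain N h ms1 (l1 ++ blk h l (k' + 1) ++ (k' + 1, h) :: l2)
          (l1 ++ seg l (k' + 1) (h - 1 - (k' + 1)) ++
            (h, l) :: (k' + 1, l) :: (k' + 1, h) :: (seg l 0 k' ++ l2)) :=
        movesChain_congr hc1 (by rw [hblk]; simp) (by simp)
      have H2 : movesChain N h [KZMove.a2 (k' + 1) l]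
          (l1 ++ seg l (k' + 1) (h - 1 - (k' + 1)) ++
            (h, l) :: (k' + 1, l) :: (k' + 1, h) :: (seg l 0 k' ++ l2))
          (l1 ++ seg l (k' + 1) (h - 1 - (k' + 1)) ++
            (k' + 1, h) :: (k' + 1, l) :: (h, l) :: (seg l 0 k' ++ l2)) :=
        movesChain_congr hc2 (by simp) (by simp)
      have H3 : movesChain N h ms3
          (l1 ++ seg l (k' + 1) (h - 1 - (k' + 1)) ++
            (k' + 1, h) :: (k' + 1, l) :: (h, l) :: (seg l 0 k' ++ l2))
          (l1 ++ (k' + 1, h) :: (blk h l (k' + 1 - 1) ++ l2)) :=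
        movesChain_congr hc3 (by simp) (by rw [hblk']; simp)
      refine ⟨ms1 ++ [KZMove.a2 (k' + 1) l] ++ ms3, ?_, ?_⟩
      · exact movesChain_append (movesChain_append H1 H2) H3
      · rw [List.filter_append, List.filter_append, filter_nsw_eq_nil hsw1,
          filter_nsw_eq_nil hsw3]
        rfl

lemma perK (N h k : ℕ) (hk1 : 1 ≤ k) (hkh : k < h) :
    ∀ (Ls : List ℕ), (∀ l ∈ Ls, h < l ∧ l ≤ N) → ∀ (l1 l2 : List (ℕ × ℕ)),
    ∃ ms, movesChain N h ms (l1 ++ Ls.flatMap (fun l => blk h l k) ++ (k, h) :: l2)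
        (l1 ++ (k, h) :: (Ls.flatMap (fun l => blk h l (k - 1)) ++ l2)) ∧
      ms.filter nsw = Ls.reverse.map (fun l => KZMove.a2 k l) := by
  intro Ls
  induction Ls using List.reverseRecOn with
  | nil => intro _ l1 l2; exact ⟨[], movesChain_nil (by simp), by simp⟩
  | append_singleton Ls l ih =>
    intro hmem l1 l2
    obtain ⟨hl1, hl2⟩ := hmem l (by simp)
    obtain ⟨ms1, hc1, hf1⟩ := blockStep N h k l hk1 hkh hl1 hl2
      (l1 ++ Ls.flatMap (fun l => blk h l k)) l2
    obtain ⟨ms2, hc2, hf2⟩ := ih (fun x hx => hmem x (by simp [hx])) l1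
      (blk h l (k - 1) ++ l2)
    have H1 : movesChain N h ms1
        (l1 ++ (Ls ++ [l]).flatMap (fun l => blk h l k) ++ (k, h) :: l2)
        (l1 ++ Ls.flatMap (fun l => blk h l k) ++ (k, h) :: (blk h l (k - 1) ++ l2)) :=
      movesChain_congr hc1 (by simp [List.flatMap_append]) (by simp)
    have H2 : movesChain N h ms2
        (l1 ++ Ls.flatMap (fun l => blk h l k) ++ (k, h) :: (blk h l (k - 1) ++ l2))
        (l1 ++ (k, h) :: ((Ls ++ [l]).flatMap (fun l => blk h l (k - 1)) ++ l2)) :=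
      movesChain_congr hc2 rfl (by simp [List.flatMap_append])
    refine ⟨ms1 ++ ms2, movesChain_append H1 H2, ?_⟩
    rw [List.filter_append, hf1, hf2]
    simp
end Moves

section Phases

/-- Labels of the `A₂` moves used while extracting `(j, h), ..., (1, h)`. -/
def labels (Ls : List ℕ) : ℕ → List KZMove
  | 0 => []
  | (j+1) => Ls.reverse.map (fun l => KZMove.a2 (j+1) l) ++ labels Ls j

lemma mem_labels {Ls : List ℕ} {m : KZMove} :
    ∀ {j : ℕ}, m ∈ labels Ls j → ∃ k l, m = KZMove.a2 k l ∧ 1 ≤ k ∧ k ≤ j ∧ l ∈ Ls := by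
  intro j
  induction j with
  | zero => intro hm; simp [labels] at hm
  | succ j ih =>
    intro hm
    rcases List.mem_append.1 hm with hm | hm
    · obtain ⟨l, hl, rfl⟩ := List.mem_map.1 hm
      exact ⟨j + 1, l, rfl, by omega, le_rfl, List.mem_reverse.1 hl⟩
    · obtain ⟨k, l, h1, h2, h3, h4⟩ := ih hm
      exact ⟨k, l, h1, h2, by omega, h4⟩

lemma count_labels {Ls : List ℕ} (hnd : Ls.Nodup) {k l : ℕ} (hk : 1 ≤ k) (hl : l ∈ Ls) :
    ∀ j : ℕ, (labels Ls j).count (KZMove.a2 k l) = if k ≤ j then 1 else 0 := by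
  intro j
  induction j with
  | zero => rw [if_neg (by omega)]; rfl
  | succ j ih =>
    show ((Ls.reverse.map (fun l => KZMove.a2 (j+1) l)) ++ labels Ls j).count _ = _
    rw [List.count_append, ih]
    by_cases hkj : k = j + 1
    · subst hkj
      rw [if_neg (by omega), if_pos le_rfl]
      have hinj : Function.Injective (fun l => KZMove.a2 (j+1) l) := by
        intro a b hab
        simpa using hab
      rw [List.count_map_of_injective _ _ hinj]
      rw [List.count_eq_one_of_mem (List.nodup_reverse.2 hnd) (List.mem_reverse.2 hl)]
    · have : KZMove.a2 k l ∉ Ls.reverse.map (fun l => KZMove.a2 (j+1) l) := by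
        intro hmem
        obtain ⟨x, _, hx⟩ := List.mem_map.1 hmem
        simp only [KZMove.a2.injEq] at hx
        omega
      rw [List.count_eq_zero_of_not_mem this]
      by_cases hle : k ≤ j
      · rw [if_pos hle, if_pos (by omega)]
      · rw [if_neg hle, if_neg (by omega)]

lemma phase1 (N h : ℕ) (Ls : List ℕ) (hLs : ∀ l ∈ Ls, h < l ∧ l ≤ N)
    (Rest : List (ℕ × ℕ)) :
    ∀ k, k ≤ h - 1 →
    ∃ ms, movesChain N h ms
        (seg h k (h - 1 - k) ++ Ls.flatMap (fun l => blk h l k) ++ (seg h 0 k ++ Rest))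
        (seg h 0 (h - 1) ++ Ls.flatMap (fun l => blk h l 0) ++ ([] ++ Rest)) ∧
      ms.filter nsw = labels Ls k := by
  intro k
  induction k with
  | zero => intro _; exact ⟨[], movesChain_nil (by simp [seg]), by simp [labels]⟩
  | succ j ih =>
    intro hj
    have hsegh : seg h 0 (j + 1) = (j + 1, h) :: seg h 0 j := by
      show (0 + j + 1, h) :: _ = _
      rw [Nat.zero_add]
    obtain ⟨ms1, hc1, hf1⟩ := perK N h (j + 1) (by omega) (by omega) Ls hLs
      (seg h (j + 1) (h - 1 - (j + 1))) (seg h 0 j ++ Rest)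
    obtain ⟨ms2, hc2, hf2⟩ := ih (by omega)
    have e1 : seg h j (h - 1 - j) = seg h (j + 1) (h - 1 - (j + 1)) ++ [(j + 1, h)] := by
      rw [show h - 1 - j = (h - 1 - (j + 1)) + 1 by omega]
      exact seg_snoc h j _
    have H1 : movesChain N h ms1
        (seg h (j + 1) (h - 1 - (j + 1)) ++ Ls.flatMap (fun l => blk h l (j + 1)) ++
          (seg h 0 (j + 1) ++ Rest))
        (seg h j (h - 1 - j) ++ Ls.flatMap (fun l => blk h l j) ++ (seg h 0 j ++ Rest)) := by
      refine movesChain_congr hc1 (by rw [hsegh]; simp) ?_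
      rw [e1]
      have : (j + 1) - 1 = j := by omega
      rw [this]
      simp
    exact ⟨ms1 ++ ms2, movesChain_append H1 hc2, by
      rw [List.filter_append, hf1, hf2]; rfl⟩

lemma phase2 (N h : ℕ) (hh1 : 1 ≤ h) :
    ∀ (Ls : List ℕ), List.Pairwise (· < ·) Ls → (∀ l ∈ Ls, h < l ∧ l ≤ N) →
    ∀ (mid l1 l2 : List (ℕ × ℕ)), (∀ l ∈ Ls, ∀ q ∈ mid, indexDisjoint (h, l) q) →
    ∃ ms, movesChain N h ms
        (l1 ++ Ls.flatMap (fun l => blk h l 0) ++ mid ++ l2)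
        (l1 ++ Ls.flatMap (fun l => seg l 0 (h - 1)) ++ mid ++
          (Ls.map (fun l => (h, l))) ++ l2) ∧
      ∀ m ∈ ms, m = KZMove.swap := by
  intro Ls
  induction Ls using List.reverseRecOn with
  | nil =>
    intro _ _ mid l1 l2 _
    exact ⟨[], movesChain_nil (by simp), by simp⟩
  | append_singleton Ls l ih =>
    intro hpw hmem mid l1 l2 hdisj
    have hpw' := List.pairwise_append.1 hpw
    obtain ⟨hl1, hl2⟩ := hmem l (by simp)
    have hblk0 : blk h l 0 = seg l 0 (h - 1) ++ [(h, l)] := rfl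
    -- move (h,l) right past mid
    have hdm : ∀ q ∈ mid, indexDisjoint (h, l) q := hdisj l (by simp)
    obtain ⟨ms1, hc1, hsw1⟩ := passRight N h (h, l) mid
      (l1 ++ Ls.flatMap (fun l => blk h l 0) ++ seg l 0 (h - 1)) l2 hdm
    -- induction on the remaining blocks
    have hdisj' : ∀ l' ∈ Ls, ∀ q ∈ seg l 0 (h - 1) ++ mid, indexDisjoint (h, l') q := by
      intro l' hl' q hq
      rcases List.mem_append.1 hq with hq | hq
      · rw [mem_seg] at hq
        have hll' : l' < l := hpw'.2.2 l' hl' l (by simp)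
        obtain ⟨ha, hb⟩ := hmem l' (by simp [hl'])
        exact ⟨by omega, by omega, by omega, by omega⟩
      · exact hdisj l' (by simp [hl']) q hq
    obtain ⟨ms2, hc2, hsw2⟩ := ih hpw'.1 (fun x hx => hmem x (by simp [hx]))
      (seg l 0 (h - 1) ++ mid) l1 ((h, l) :: l2) hdisj'
    have H1 : movesChain N h ms1
        (l1 ++ (Ls ++ [l]).flatMap (fun l => blk h l 0) ++ mid ++ l2)
        (l1 ++ Ls.flatMap (fun l => blk h l 0) ++ (seg l 0 (h - 1) ++ mid) ++
          ((h, l) :: l2)) :=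
      movesChain_congr hc1 (by simp [List.flatMap_append, hblk0]) (by simp)
    have H2 : movesChain N h ms2
        (l1 ++ Ls.flatMap (fun l => blk h l 0) ++ (seg l 0 (h - 1) ++ mid) ++
          ((h, l) :: l2))
        (l1 ++ (Ls ++ [l]).flatMap (fun l => seg l 0 (h - 1)) ++ mid ++
          ((Ls ++ [l]).map (fun l => (h, l))) ++ l2) :=
      movesChain_congr hc2 rfl (by simp [List.flatMap_append])
    refine ⟨ms1 ++ ms2, movesChain_append H1 H2, ?_⟩
    intro m hm
    rcases List.mem_append.1 hm with h' | h'
    · exact hsw1 m h'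
    · exact hsw2 m h'

end Phases

section Assembly

lemma seg_eq_blk (h l : ℕ) (hh : 1 ≤ h) : seg l 0 h = blk h l (h - 1) := by
  obtain ⟨j, rfl⟩ : ∃ j, h = j + 1 := ⟨h - 1, by omega⟩
  rw [Nat.add_sub_cancel]
  show (0 + j + 1, l) :: seg l 0 j = seg l j (j + 1 - 1 - j) ++ (j + 1, l) :: seg l 0 j
  rw [Nat.zero_add, show j + 1 - 1 - j = 0 by omega]
  rfl

lemma succOrd_isAntisymm (h : ℕ) : IsAntisymm (ℕ × ℕ) (succOrd h) :=
  ⟨fun _ _ h1 h2 => (succOrd_antisymm_aux h1 h2).elim⟩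


/-- for `N ≥ 3` and `2 ≤ h ≤ N − 1`, if `L_h` and `L_{h−1}` enumerate the
positive roots `{(k,l) : 1 ≤ k < l ≤ N}` in strictly decreasing order with respect to
`≻_h` and `≻_{h−1}` respectively, then there is a finite sequence of swap moves and
`A₂` moves transforming `L_h` into `L_{h−1}`, in which for every `(k,l)` with
`1 ≤ k < h < l ≤ N` the `A₂` move labeled `(k,l)` is used exactly once, and all
remaining moves are swap moves. -/
theorem exists_move_sequence_between_special_orders (N h : ℕ)
    (hN : 3 ≤ N) (hh2 : 2 ≤ h) (hh : h ≤ N - 1)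
    (Lh Lh1 : List (ℕ × ℕ))
    (hsorted : Lh.Pairwise (succOrd h)) (hsorted1 : Lh1.Pairwise (succOrd (h - 1)))
    (hmem : ∀ p : ℕ × ℕ, p ∈ Lh ↔ (1 ≤ p.1 ∧ p.1 < p.2 ∧ p.2 ≤ N))
    (hmem1 : ∀ p : ℕ × ℕ, p ∈ Lh1 ↔ (1 ≤ p.1 ∧ p.1 < p.2 ∧ p.2 ≤ N))
    (hnodup : Lh.Nodup) (hnodup1 : Lh1.Nodup) :
    ∃ ms : List KZMove, movesChain N h ms Lh Lh1 ∧
      (∀ k l : ℕ, 1 ≤ k → k < h → h < l → l ≤ N →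
        ms.count (KZMove.a2 k l) = 1) ∧
      (∀ m ∈ ms, m ≠ KZMove.swap →
        ∃ k l : ℕ, m = KZMove.a2 k l ∧ 1 ≤ k ∧ k < h ∧ h < l ∧ l ≤ N) := by
  -- identify the two lists with the canonical ones
  have hCLh : Lh = CL N h := by
    haveI := succOrd_isAntisymm h
    have hperm : Lh.Perm (CL N h) :=
      (List.perm_ext_iff_of_nodup hnodup (nodup_CL N h (by omega) (by omega))).2
        (fun a => (hmem a).trans (mem_CL (by omega) (by omega)).symm)
    exact List.Perm.eq_of_pairwise (fun _ _ _ _ h1 h2 => (succOrd_antisymm_aux h1 h2).elim) hsorted (sorted_CL N h (by omega) (by omega)) hperm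
  have hCLh1 : Lh1 = CL N (h - 1) := by
    haveI := succOrd_isAntisymm (h - 1)
    have hperm : Lh1.Perm (CL N (h - 1)) :=
      (List.perm_ext_iff_of_nodup hnodup1 (nodup_CL N (h - 1) (by omega) (by omega))).2
        (fun a => (hmem1 a).trans (mem_CL (by omega) (by omega)).symm)
    exact List.Perm.eq_of_pairwise (fun _ _ _ _ h1 h2 => (succOrd_antisymm_aux h1 h2).elim) hsorted1
      (sorted_CL N (h - 1) (by omega) (by omega)) hperm
  subst hCLh hCLh1
  set Ls : List ℕ := List.range' (h + 1) (N - h) with hLsdef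
  have hLs : ∀ l ∈ Ls, h < l ∧ l ≤ N := by
    intro l hl
    rw [hLsdef, List.mem_range'_1] at hl
    omega
  have hLsnd : Ls.Nodup := List.nodup_range'
  have hLspw : List.Pairwise (· < ·) Ls := List.pairwise_lt_range'
  -- decompositions of the two canonical lists
  have eA : Apart N h = Ls.flatMap (fun l => blk h l (h - 1)) := by
    unfold Apart
    rw [hLsdef]
    congr 1
    exact funext fun l => seg_eq_blk h l (by omega)
  have eB : Bp h = seg h 0 (h - 1) ++ Bp (h - 1) := by
    obtain ⟨m, rfl⟩ : ∃ m, h = m + 2 := ⟨h - 2, by omega⟩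
    rfl
  have eA1 : Apart N (h - 1) = seg h 0 (h - 1) ++ Ls.flatMap (fun l => seg l 0 (h - 1)) := by
    unfold Apart
    rw [hLsdef]
    rw [show N - (h - 1) = (N - h) + 1 by omega, List.range'_succ,
      show h - 1 + 1 = h by omega]
    simp [List.flatMap_cons]
  have eC1 : Cpart N (h - 1) = Ls.map (fun l => (h, l)) ++ Cpart N h := by
    unfold Cpart
    rw [hLsdef]
    rw [show N - 1 - (h - 1) = (N - h - 1) + 1 by omega, List.range'_succ,
      show h - 1 + 1 = h by omega, show N - 1 - h = N - h - 1 by omega]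
    simp only [List.flatMap_cons]
    rfl
  -- phase 1
  obtain ⟨ms1, hc1, hf1⟩ := phase1 N h Ls hLs (Bp (h - 1) ++ Cpart N h) (h - 1) le_rfl
  -- phase 2
  have hdisj : ∀ l ∈ Ls, ∀ q ∈ Bp (h - 1), indexDisjoint (h, l) q := by
    intro l hl q hq
    rw [mem_Bp] at hq
    obtain ⟨h1, h2⟩ := hLs l hl
    exact ⟨by omega, by omega, by omega, by omega⟩
  obtain ⟨ms2, hc2, hsw2⟩ := phase2 N h (by omega) Ls hLspw hLs (Bp (h - 1))
    (seg h 0 (h - 1)) (Cpart N h) hdisj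
  have e0 : seg h (h - 1) (h - 1 - (h - 1)) = [] := by rw [Nat.sub_self]; rfl
  have H1 : movesChain N h ms1 (CL N h)
      (seg h 0 (h - 1) ++ Ls.flatMap (fun l => blk h l 0) ++ Bp (h - 1) ++ Cpart N h) := by
    refine movesChain_congr hc1 ?_ (by simp)
    rw [CL, eA, eB, e0]
    simp
  have H2 : movesChain N h ms2
      (seg h 0 (h - 1) ++ Ls.flatMap (fun l => blk h l 0) ++ Bp (h - 1) ++ Cpart N h)
      (CL N (h - 1)) := by
    refine movesChain_congr hc2 rfl ?_
    rw [CL, eA1, eC1]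
    simp
  refine ⟨ms1 ++ ms2, movesChain_append H1 H2, ?_, ?_⟩
  · intro k l hk1 hkh hhl hlN
    have hfil : (ms1 ++ ms2).filter nsw = labels Ls (h - 1) := by
      rw [List.filter_append, hf1, filter_nsw_eq_nil hsw2, List.append_nil]
    have he : (ms1 ++ ms2).count (KZMove.a2 k l) =
        ((ms1 ++ ms2).filter nsw).count (KZMove.a2 k l) :=
      (List.count_filter rfl).symm
    rw [he, hfil, count_labels hLsnd hk1 (by rw [hLsdef, List.mem_range'_1]; omega)]
    rw [if_pos (by omega)]
  · intro m hm hne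
    have hmf : m ∈ (ms1 ++ ms2).filter nsw := List.mem_filter.2 ⟨hm, nsw_eq_true hne⟩
    rw [List.filter_append, hf1, filter_nsw_eq_nil hsw2, List.append_nil] at hmf
    obtain ⟨k, l, h1, h2, h3, h4⟩ := mem_labels hmf
    obtain ⟨h5, h6⟩ := hLs l h4
    exact ⟨k, l, h1, h2, by omega, h5, h6⟩

end Assembly
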